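/- Processing vertices of a finite DAG in topological order and applying the update cost[v] ← min over already-processed predecessors u of max(cost[u], w(u,v)), starting from cost[s] = 0, yields upon termination cost[v] = the minimum over all s-to-v paths of the maximum edge weight along the path, for every vertex v reachable from s. -/

import Mathlib

/-- `PathCost E w s v c` holds iff there is a directed path from `s` to `v`
whose maximum edge weight is `c` (empty path has cost `0`). Weights live in
`ℝ≥0∞`, so unreachable vertices get `sInf ∅ = ∞`. -/
inductive PathCost {n : ℕ} (E : Fin n → Fin n → Prop) (w : Fin n → Fin n → ENNReal)
    (s : Fin n) : Fin n → ENNReal → Prop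
  | nil : PathCost E w s s 0
  | cons {u v : Fin n} {c : ENNReal} :
      PathCost E w s u c → E u v → PathCost E w s v (max c (w u v))

private lemma fin_strong_ind {n : ℕ} {P : Fin n → Prop}
    (h : ∀ v : Fin n, (∀ u, u < v → P u) → P v) : ∀ v, P v := by
  rintro ⟨i, hi⟩
  induction i using Nat.strong_induction_on with
  | _ i IH =>
    exact h ⟨i, hi⟩ fun u hu => by
      have := IH u.val hu u.isLt
      simpa using this

/-- Correctness of the topological-order dynamic program (Theorem 1 of the paper):
in a finite DAG whose edges respect the index (topological) order, if `cost`
satisfies `cost s = 0` and, for `v ≠ s`,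
`cost v = ⨅ predecessors u, max (cost u) (w u v)` (an empty infimum being `∞`),
then for every vertex `v`, `cost v` is the minimum over all `s`-to-`v` paths of
the maximum edge weight (and `∞` for unreachable vertices). -/
theorem topological_dp_correct {n : ℕ} (E : Fin n → Fin n → Prop)
    (w : Fin n → Fin n → ENNReal) (s : Fin n)
    (hE : ∀ u v, E u v → u < v) (hs : ∀ u, ¬ E u s)
    (cost : Fin n → ENNReal) (hcost0 : cost s = 0)
    (hupd : ∀ v, v ≠ s → cost v = ⨅ (u : Fin n) (_ : E u v), max (cost u) (w u v)) :
    ∀ v, cost v = sInf {c | PathCost E w s v c} := by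
  apply fin_strong_ind
  intro v IH
  by_cases hv : v = s
  · subst hv
    rw [hcost0]
    exact le_antisymm zero_le (sInf_le PathCost.nil)
  · rw [hupd v hv]
    apply le_antisymm
    · apply le_sInf
      rintro c hc
      cases hc with
      | nil => exact absurd rfl hv
      | @cons a b d hp he =>
        calc (⨅ (u : Fin n) (_ : E u v), max (cost u) (w u v))
            ≤ max (cost a) (w a v) := iInf_le_of_le a (iInf_le _ he)
          _ ≤ max d (w a v) := by
              apply max_le_max_right
              rw [IH a (hE a v he)]
              exact sInf_le hp
    · apply le_iInf; intro u; apply le_iInf; intro he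
      rw [IH u (hE u v he)]
      conv_rhs => rw [sInf_eq_iInf', iInf_sup_eq]
      apply le_iInf
      rintro ⟨c, hc⟩
      exact sInf_le (PathCost.cons hc he)
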